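/- If ρ ∈ (−1,0), then G attains its global maximum over ℝ at y*, i.e. G(y) ≤ G(y*) for all y ∈ ℝ; moreover G(y*) ≥ 0. -/
import Mathlib

open MeasureTheory Real

/-- The standard normal density `φ(u) = (2π)^{-1/2} exp(-u²/2)`. -/
noncomputable def stdNormalPDF (u : ℝ) : ℝ := (Real.sqrt (2 * π))⁻¹ * Real.exp (-u ^ 2 / 2)

/-- The standard normal CDF `Φ(x) = ∫_{-∞}^x φ(u) du`. -/
noncomputable def stdNormalCDF (x : ℝ) : ℝ := ∫ u in Set.Iic x, stdNormalPDF u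

/-- `G(y) = Φ(x)Φ(y) − ∫_{−∞}^{y} Φ((x − ρu)/√(1−ρ²)) φ(u) du`. -/
noncomputable def Gfun (ρ x y : ℝ) : ℝ :=
  stdNormalCDF x * stdNormalCDF y
    - ∫ u in Set.Iic y, stdNormalCDF ((x - ρ * u) / Real.sqrt (1 - ρ ^ 2)) * stdNormalPDF u

/-- `y* = x(1 − √(1−ρ²))/ρ`. -/
noncomputable def ystar (ρ x : ℝ) : ℝ := x * (1 - Real.sqrt (1 - ρ ^ 2)) / ρ

lemma stdNormalPDF_nonneg (u : ℝ) : 0 ≤ stdNormalPDF u :=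
  mul_nonneg (inv_nonneg.2 (Real.sqrt_nonneg _)) (Real.exp_pos _).le

lemma stdNormalPDF_eq : stdNormalPDF = fun u => (Real.sqrt (2 * π))⁻¹ * Real.exp (-(1/2) * u ^ 2) := by
  funext u
  unfold stdNormalPDF
  congr 1
  ring

lemma stdNormalPDF_integrable : Integrable stdNormalPDF := by
  rw [stdNormalPDF_eq]
  exact (integrable_exp_neg_mul_sq (by norm_num)).const_mul _

lemma stdNormalPDF_continuous : Continuous stdNormalPDF := by
  unfold stdNormalPDF
  continuity

lemma stdNormal_integral : ∫ u, stdNormalPDF u = 1 := by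
  rw [stdNormalPDF_eq]
  rw [integral_const_mul, integral_gaussian]
  have h2 : π / (1/2 : ℝ) = 2 * π := by ring
  rw [h2]
  rw [inv_mul_cancel₀]
  exact Real.sqrt_ne_zero'.2 (by positivity)

lemma stdNormalCDF_nonneg (t : ℝ) : 0 ≤ stdNormalCDF t :=
  setIntegral_nonneg measurableSet_Iic fun u _ => stdNormalPDF_nonneg u

lemma stdNormalCDF_mono : Monotone stdNormalCDF := fun a b hab =>
  setIntegral_mono_set stdNormalPDF_integrable.integrableOn
    (Filter.Eventually.of_forall fun u => stdNormalPDF_nonneg u)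
    (HasSubset.Subset.eventuallyLE (Set.Iic_subset_Iic.2 hab))

lemma stdNormalCDF_le_one (t : ℝ) : stdNormalCDF t ≤ 1 := by
  rw [← stdNormal_integral]
  exact setIntegral_le_integral stdNormalPDF_integrable
    (Filter.Eventually.of_forall fun u => stdNormalPDF_nonneg u)

lemma stmt5_f_integrable (ρ x : ℝ) :
    Integrable (fun u => stdNormalCDF ((x - ρ * u) / Real.sqrt (1 - ρ ^ 2)) * stdNormalPDF u) := by
  have hmeas : Measurable (fun u => stdNormalCDF ((x - ρ * u) / Real.sqrt (1 - ρ ^ 2)) * stdNormalPDF u) := by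
    exact (stdNormalCDF_mono.measurable.comp
      (by fun_prop : Measurable fun u : ℝ => (x - ρ * u) / Real.sqrt (1 - ρ ^ 2))).mul
      stdNormalPDF_continuous.measurable
  refine Integrable.mono stdNormalPDF_integrable hmeas.aestronglyMeasurable ?_
  refine Filter.Eventually.of_forall fun u => ?_
  have h1 := mul_le_of_le_one_left (stdNormalPDF_nonneg u)
    (stdNormalCDF_le_one ((x - ρ * u) / Real.sqrt (1 - ρ ^ 2)))
  simpa [Real.norm_eq_abs, abs_mul, abs_of_nonneg (stdNormalCDF_nonneg ((x - ρ * u) / Real.sqrt (1 - ρ ^ 2))),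
    abs_of_nonneg (stdNormalPDF_nonneg u)] using h1

/-- If `ρ ∈ (−1,0)` then `G` attains its global maximum over `ℝ` at
`y*`, i.e. `G(y) ≤ G(y*)` for all `y`; moreover `G(y*) ≥ 0`. -/
theorem stmt5 (ρ x : ℝ) (hρ : ρ ∈ Set.Ioo (-1 : ℝ) 0) :
    (∀ y : ℝ, Gfun ρ x y ≤ Gfun ρ x (ystar ρ x)) ∧ 0 ≤ Gfun ρ x (ystar ρ x) := by
  obtain ⟨hρ1, hρ2⟩ := hρ
  have hρ0 : ρ ≠ 0 := ne_of_lt hρ2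
  have hc2 : (0:ℝ) < 1 - ρ ^ 2 := by nlinarith
  set c : ℝ := Real.sqrt (1 - ρ ^ 2) with hc_def
  have hc : 0 < c := Real.sqrt_pos.2 hc2
  set Y : ℝ := ystar ρ x with hY_def
  set f : ℝ → ℝ := fun u => stdNormalCDF ((x - ρ * u) / c) * stdNormalPDF u with hf_def
  have hfint : Integrable f := stmt5_f_integrable ρ x
  set Φx : ℝ := stdNormalCDF x with hΦx_def
  -- at Y the argument equals x
  have hYval : (x - ρ * Y) / c = x := by
    rw [hY_def]
    unfold ystar
    rw [← hc_def]
    field_simp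
    ring
  -- monotonicity of the argument
  have harg : ∀ u v : ℝ, u ≤ v → (x - ρ * u) / c ≤ (x - ρ * v) / c := by
    intro u v huv
    exact (div_le_div_iff_of_pos_right hc).2 (by nlinarith)
  -- pointwise comparisons
  have key1 : ∀ u : ℝ, u ≤ Y → stdNormalCDF ((x - ρ * u) / c) ≤ Φx := by
    intro u hu
    have h := stdNormalCDF_mono (harg u Y hu)
    rwa [hYval] at h
  have key2 : ∀ u : ℝ, Y ≤ u → Φx ≤ stdNormalCDF ((x - ρ * u) / c) := by
    intro u hu
    have h := stdNormalCDF_mono (harg Y u hu)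
    rwa [hYval] at h
  -- the comparison function
  set g : ℝ → ℝ := fun u => Φx * stdNormalPDF u with hg_def
  have hgint : Integrable g := stdNormalPDF_integrable.const_mul Φx
  -- second part: 0 ≤ G(Y)
  have part2 : 0 ≤ Gfun ρ x Y := by
    have h1 : Gfun ρ x Y = (∫ u in Set.Iic Y, g u) - ∫ u in Set.Iic Y, f u := by
      unfold Gfun
      rw [← hc_def, ← hf_def, ← hΦx_def]
      congr 1
      rw [hg_def]
      rw [integral_const_mul]
      rfl
    rw [h1, sub_nonneg]
    refine setIntegral_mono_on hfint.integrableOn hgint.integrableOn measurableSet_Iic ?_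
    intro u hu
    exact mul_le_mul_of_nonneg_right (key1 u hu) (stdNormalPDF_nonneg u)
  refine ⟨fun y => ?_, part2⟩
  -- G(Y) - G(y) = ∫_{y..Y} (g - f)
  have hdiff : Gfun ρ x Y - Gfun ρ x y = ∫ u in y..Y, (g u - f u) := by
    have hgiic : ∀ t : ℝ, Φx * stdNormalCDF t = ∫ u in Set.Iic t, g u := by
      intro t
      rw [hg_def, integral_const_mul]
      rfl
    have hG : ∀ t : ℝ, Gfun ρ x t = (∫ u in Set.Iic t, g u) - ∫ u in Set.Iic t, f u := by
      intro t
      unfold Gfun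
      rw [← hc_def, ← hf_def, ← hΦx_def, hgiic]
    rw [hG Y, hG y]
    rw [intervalIntegral.integral_sub hgint.intervalIntegrable
      hfint.intervalIntegrable]
    rw [← intervalIntegral.integral_Iic_sub_Iic hgint.integrableOn hgint.integrableOn,
      ← intervalIntegral.integral_Iic_sub_Iic hfint.integrableOn hfint.integrableOn]
    ring
  have hnn : 0 ≤ ∫ u in y..Y, (g u - f u) := by
    rcases le_total y Y with hyY | hYy
    · refine intervalIntegral.integral_nonneg hyY ?_
      intro u hu
      rw [sub_nonneg, hg_def, hf_def]
      exact mul_le_mul_of_nonneg_right (key1 u hu.2) (stdNormalPDF_nonneg u)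
    · rw [intervalIntegral.integral_symm]
      rw [← intervalIntegral.integral_neg]
      refine intervalIntegral.integral_nonneg hYy ?_
      intro u hu
      rw [neg_nonneg, sub_nonpos, hg_def, hf_def]
      exact mul_le_mul_of_nonneg_right (key2 u hu.1) (stdNormalPDF_nonneg u)
  linarith [hdiff ▸ hnn]
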